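/- Let U be an n×n real orthogonal matrix (U * Uᵀ = 1), let m be even, let π be a pair partition of Fin m (a partition all of whose blocks have exactly two elements), and let g : Fin m → Fin n. Then the sum over all functions h : Fin m → Fin n that are constant on each block of π of the product ∏_{k : Fin m} U (g k) (h k) equals ∏ over blocks {a,b} of π of (if g a = g b then 1 else 0). -/

import Mathlib

open scoped Classical in
theorem stmt2 (n m : ℕ) (hm : Even m) (U : Matrix (Fin n) (Fin n) ℝ)
    (hU : U * U.transpose = 1)
    (π : Finpartition (Finset.univ : Finset (Fin m)))
    (hπ : ∀ B ∈ π.parts, B.card = 2) (g : Fin m → Fin n) :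
    ∑ h : Fin m → Fin n,
      (if ∀ B ∈ π.parts, ∀ a ∈ B, ∀ b ∈ B, h a = h b
        then ∏ k, U (g k) (h k) else 0)
    = ∏ B ∈ π.parts,
        (if ∀ a ∈ B, ∀ b ∈ B, g a = g b then (1 : ℝ) else 0) := by
  classical
  have hδ : ∀ a b : Fin n, ∑ j, U a j * U b j = if a = b then (1 : ℝ) else 0 := by
    intro a b
    have := congrFun (congrFun hU a) b
    simpa [Matrix.mul_apply, Matrix.transpose_apply, Matrix.one_apply] using this
  -- per-block identity
  have hblock : ∀ B ∈ π.parts,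
      (∑ j : Fin n, ∏ k ∈ B, U (g k) j)
        = if ∀ a ∈ B, ∀ b ∈ B, g a = g b then (1 : ℝ) else 0 := by
    intro B hB
    obtain ⟨a, b, hab, rfl⟩ := Finset.card_eq_two.mp (hπ B hB)
    have h1 : ∀ j : Fin n, ∏ k ∈ ({a, b} : Finset (Fin m)), U (g k) j
        = U (g a) j * U (g b) j := by
      intro j
      rw [Finset.prod_insert (by simpa using hab), Finset.prod_singleton]
    simp only [h1, hδ]
    have h2 : (∀ x ∈ ({a, b} : Finset (Fin m)), ∀ y ∈ ({a, b} : Finset (Fin m)),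
        g x = g y) ↔ g a = g b := by
      constructor
      · intro h; exact h a (by simp) b (by simp)
      · intro h x hx y hy
        simp only [Finset.mem_insert, Finset.mem_singleton] at hx hy
        rcases hx with rfl | rfl <;> rcases hy with rfl | rfl
        · rfl
        · exact h
        · exact h.symm
        · rfl
    rw [if_congr h2 rfl rfl]
  -- rewrite RHS
  rw [Finset.prod_congr rfl (fun B hB => (hblock B hB).symm)]
  -- transform RHS into sum over φ : π.parts → Fin n
  rw [show (∏ B ∈ π.parts, ∑ j : Fin n, ∏ k ∈ B, U (g k) j)
      = ∏ B : π.parts, ∑ j : Fin n, ∏ k ∈ (B : Finset (Fin m)), U (g k) j from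
    (Finset.prod_attach _ _).symm]
  rw [Finset.prod_univ_sum]
  rw [Fintype.piFinset_univ]
  -- rewrite LHS as a sum over the filtered set
  rw [← Finset.sum_filter]
  -- bijection
  refine Finset.sum_nbij'
      (i := fun (h : Fin m → Fin n) => fun B : π.parts => h ((B : Finset (Fin m)).min'
        (Finset.card_pos.mp (by rw [hπ B B.2]; norm_num))))
      (j := fun (φ : {x // x ∈ π.parts} → Fin n) => fun (k : Fin m) => φ ⟨π.part k, π.part_mem.mpr (Finset.mem_univ k)⟩)
      ?_ ?_ ?_ ?_ ?_
  · intro h _; exact Finset.mem_univ _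
  · intro φ _
    simp only [Finset.mem_filter, Finset.mem_univ, true_and]
    intro B hB a ha b hb
    have : π.part a = π.part b := by
      rw [π.part_eq_of_mem hB ha, π.part_eq_of_mem hB hb]
    simp [this]
  · intro h hh
    funext k
    simp only [Finset.mem_filter, Finset.mem_univ, true_and] at hh
    have hk : k ∈ π.part k := π.mem_part (Finset.mem_univ k)
    have hne : (π.part k).Nonempty := ⟨k, hk⟩
    exact hh (π.part k) (π.part_mem.mpr (Finset.mem_univ k)) _ (Finset.min'_mem _ hne) k hk
  · intro φ _
    funext B
    have hne : (B : Finset (Fin m)).Nonempty := π.nonempty_of_mem_parts B.2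
    have : π.part ((B : Finset (Fin m)).min' hne) = (B : Finset (Fin m)) :=
      π.part_eq_of_mem B.2 (Finset.min'_mem _ hne)
    simp only [Subtype.ext_iff, this]
  · intro h hh
    simp only [Finset.mem_filter, Finset.mem_univ, true_and] at hh
    have huniv : (Finset.univ : Finset (Fin m)) = π.parts.biUnion id :=
      π.biUnion_parts.symm
    rw [show (∏ k, U (g k) (h k)) = ∏ k ∈ π.parts.biUnion id, U (g k) (h k) by
      rw [← huniv]]
    rw [Finset.prod_biUnion (fun B hB C hC hBC => π.disjoint hB hC hBC)]
    simp only [id_eq]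
    rw [← Finset.prod_attach π.parts (fun B => ∏ k ∈ B, U (g k) (h k))]
    refine Finset.prod_congr rfl fun B _ => Finset.prod_congr rfl fun k hk => ?_
    have : h k = h ((B : Finset (Fin m)).min'
        (Finset.card_pos.mp (by rw [hπ B B.2]; norm_num))) :=
      hh B B.2 k hk _ (Finset.min'_mem _ _)
    rw [this]
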